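/- Let M be a matroid of rank r on finite ground set E. Then Z^⊤_{tr(M)}(s) = Z^⊤_M(s) + (1/(|E|s + r - 1)) · Y_M(s), where tr(M) is the truncation of M and Y_M is the Möbius inversion of Z^⊤_M. -/

import Mathlib

open scoped Classical
open Polynomial

/-- The unsigned Stirling number of the first kind `c(n,k)`: the number of
permutations of an `n`-element set with exactly `k` disjoint cycles
(fixed points count as cycles). -/
noncomputable def stirlingFirst (n k : ℕ) : ℕ :=
  (Finset.univ.filter fun σ : Equiv.Perm (Fin n) =>
    Multiset.card σ.cycleType + (n - σ.support.card) = k).card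

/-- The Stirling number of the second kind `S(n,k)`: the number of partitions of an
`n`-element set into exactly `k` nonempty parts. -/
noncomputable def stirlingSecond (n k : ℕ) : ℕ :=
  (Finset.univ.filter fun P : Finset (Finset (Fin n)) =>
    P.card = k ∧ ∅ ∉ P ∧ (P : Set (Finset (Fin n))).PairwiseDisjoint id ∧
      P.sup id = Finset.univ).card

/-- A matroid on a finite ground set `E`, presented by its rank function. -/
structure FinMatroid (α : Type*) [DecidableEq α] where
  E : Finset α
  rk : Finset α → ℕ
  rk_empty : rk ∅ = 0
  rk_le_card : ∀ S : Finset α, rk S ≤ S.card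
  rk_mono : ∀ ⦃S T : Finset α⦄, S ⊆ T → rk S ≤ rk T
  rk_submod : ∀ S T : Finset α, rk (S ∪ T) + rk (S ∩ T) ≤ rk S + rk T

namespace FinMatroid

variable {α : Type*} [DecidableEq α]

/-- A flat of a matroid: a subset of the ground set such that adding any new element
of the ground set increases the rank. -/
def IsFlat (M : FinMatroid α) (F : Finset α) : Prop :=
  F ⊆ M.E ∧ ∀ x ∈ M.E, x ∉ F → M.rk F < M.rk (insert x F)

/-- The lattice of flats `L(M)`, as a finset. -/
noncomputable def flats (M : FinMatroid α) : Finset (Finset α) :=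
  M.E.powerset.filter fun F => M.IsFlat F

/-- The proper flats, i.e. flats different from the ground set. -/
noncomputable def properFlats (M : FinMatroid α) : Finset (Finset α) :=
  M.flats.filter fun F => F ≠ M.E

/-- A matroid is loopless if every singleton of the ground set has rank one. -/
def Loopless (M : FinMatroid α) : Prop := ∀ x ∈ M.E, M.rk {x} = 1

/-- The restriction `M|F` of a matroid to a subset of its ground set. -/
def restrict (M : FinMatroid α) (F : Finset α) : FinMatroid α :=
  ⟨F, M.rk, M.rk_empty, M.rk_le_card, M.rk_mono, M.rk_submod⟩

/-- The characteristic polynomial attached to a ground set and a rank function: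
`χ(q) = ∑_{S ⊆ E} (-1)^{|S|} q^{rk E - rk S}`. -/
noncomputable def charPolyAux (E : Finset α) (rk : Finset α → ℕ) : Polynomial ℚ :=
  ∑ S ∈ E.powerset, (-1 : Polynomial ℚ) ^ S.card * X ^ (rk E - rk S)

/-- The characteristic polynomial `χ_M(q)` of a matroid. -/
noncomputable def charPoly (M : FinMatroid α) : Polynomial ℚ := charPolyAux M.E M.rk

/-- The characteristic polynomial `χ_{M/F}(q)` of the contraction of `M` at `F`. -/
noncomputable def contractCharPoly (M : FinMatroid α) (F : Finset α) : Polynomial ℚ :=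
  charPolyAux (M.E \ F) fun S => M.rk (S ∪ F) - M.rk F

/-- The reduced characteristic polynomial `χ̄(q) = χ(q)/(q-1)`. -/
noncomputable def reducedCharPoly (p : Polynomial ℚ) : Polynomial ℚ := p /ₘ (X - C 1)

/-- The value `χ̄_{M/F}(1)` of the reduced characteristic polynomial of `M/F` at `q = 1`. -/
noncomputable def redCharContractOne (M : FinMatroid α) (F : Finset α) : ℚ :=
  (reducedCharPoly (M.contractCharPoly F)).eval 1

/-- The truncation `tr(M)`, with rank function `S ↦ min (rk S) (rk M - 1)`. -/
def truncation (M : FinMatroid α) : FinMatroid α where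
  E := M.E
  rk S := min (M.rk S) (M.rk M.E - 1)
  rk_empty := by simp [M.rk_empty]
  rk_le_card S := le_trans (min_le_left _ _) (M.rk_le_card S)
  rk_mono S T h := min_le_min (M.rk_mono h) le_rfl
  rk_submod S T := by
    have h1 := M.rk_submod S T
    have h2 : M.rk S ≤ M.rk (S ∪ T) := M.rk_mono Finset.subset_union_left
    have h3 : M.rk T ≤ M.rk (S ∪ T) := M.rk_mono Finset.subset_union_right
    have h4 : M.rk (S ∩ T) ≤ M.rk S := M.rk_mono Finset.inter_subset_left
    simp only [Nat.min_def]
    split_ifs <;> omega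

/-- The direct sum `M₁ ⊕ M₂` of two matroids on disjoint ground sets. -/
def directSum (M₁ M₂ : FinMatroid α) (h : Disjoint M₁.E M₂.E) : FinMatroid α where
  E := M₁.E ∪ M₂.E
  rk S := M₁.rk (S ∩ M₁.E) + M₂.rk (S ∩ M₂.E)
  rk_empty := by simp [M₁.rk_empty, M₂.rk_empty]
  rk_le_card S := by
    have hd : Disjoint (S ∩ M₁.E) (S ∩ M₂.E) :=
      h.mono Finset.inter_subset_right Finset.inter_subset_right
    calc M₁.rk (S ∩ M₁.E) + M₂.rk (S ∩ M₂.E)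
        ≤ (S ∩ M₁.E).card + (S ∩ M₂.E).card :=
          add_le_add (M₁.rk_le_card _) (M₂.rk_le_card _)
      _ = ((S ∩ M₁.E) ∪ (S ∩ M₂.E)).card := (Finset.card_union_of_disjoint hd).symm
      _ ≤ S.card := Finset.card_le_card
          (Finset.union_subset Finset.inter_subset_left Finset.inter_subset_left)
  rk_mono S T hST :=
    add_le_add (M₁.rk_mono (Finset.inter_subset_inter hST subset_rfl))
      (M₂.rk_mono (Finset.inter_subset_inter hST subset_rfl))
  rk_submod S T := by
    have e1 : ∀ E' : Finset α, (S ∪ T) ∩ E' = (S ∩ E') ∪ (T ∩ E') := by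
      intro E'; ext x; simp only [Finset.mem_union, Finset.mem_inter]; tauto
    have e2 : ∀ E' : Finset α, (S ∩ T) ∩ E' = (S ∩ E') ∩ (T ∩ E') := by
      intro E'; ext x; simp only [Finset.mem_inter]; tauto
    simp only [e1, e2]
    have h1 := M₁.rk_submod (S ∩ M₁.E) (T ∩ M₁.E)
    have h2 := M₂.rk_submod (S ∩ M₂.E) (T ∩ M₂.E)
    omega

/-- The free matroid `U_{n,n}` on a ground set `E` with `|E| = n`. -/
def freeM (E : Finset α) : FinMatroid α where
  E := E
  rk S := (S ∩ E).card
  rk_empty := by simp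
  rk_le_card S := Finset.card_le_card Finset.inter_subset_left
  rk_mono S T h := Finset.card_le_card (Finset.inter_subset_inter h subset_rfl)
  rk_submod S T := by
    have e1 : (S ∪ T) ∩ E = (S ∩ E) ∪ (T ∩ E) := by
      ext x; simp only [Finset.mem_union, Finset.mem_inter]; tauto
    have e2 : (S ∩ T) ∩ E = (S ∩ E) ∩ (T ∩ E) := by
      ext x; simp only [Finset.mem_inter]; tauto
    simp only [e1, e2]
    exact (Finset.card_union_add_card_inter _ _).le

/-- The uniform matroid `U_{r,n}` on a ground set `E` with `|E| = n`. -/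
def uniformM (E : Finset α) (r : ℕ) : FinMatroid α where
  E := E
  rk S := min (S ∩ E).card r
  rk_empty := by simp
  rk_le_card S := le_trans (min_le_left _ _) (Finset.card_le_card Finset.inter_subset_left)
  rk_mono S T h := min_le_min (Finset.card_le_card (Finset.inter_subset_inter h subset_rfl)) le_rfl
  rk_submod S T := by
    have e1 : (S ∪ T) ∩ E = (S ∩ E) ∪ (T ∩ E) := by
      ext x; simp only [Finset.mem_union, Finset.mem_inter]; tauto
    have e2 : (S ∩ T) ∩ E = (S ∩ E) ∩ (T ∩ E) := by
      ext x; simp only [Finset.mem_inter]; tauto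
    have h3 := Finset.card_union_add_card_inter (S ∩ E) (T ∩ E)
    have h4 : (S ∩ E).card ≤ ((S ∩ E) ∪ (T ∩ E)).card :=
      Finset.card_le_card Finset.subset_union_left
    have h5 : (T ∩ E).card ≤ ((S ∩ E) ∪ (T ∩ E)).card :=
      Finset.card_le_card Finset.subset_union_right
    simp only [e1, e2, Nat.min_def]
    split_ifs <;> omega

/-- The closure `cl_M(S)` of a set in a matroid: all ground set elements whose
addition does not increase the rank. -/
def cl (M : FinMatroid α) (S : Finset α) : Finset α :=
  M.E.filter fun x => M.rk (insert x S) = M.rk S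

/-- The rank function of the free extension `M + e`. -/
def freeExtRk (M : FinMatroid α) (e : α) (S : Finset α) : ℕ :=
  if e ∈ S then
    (if M.cl (S.erase e) = M.E then M.rk (S.erase e) else M.rk (S.erase e) + 1)
  else M.rk S

/-- The free extension `M + e`, realized as the truncation of `M ⊕ U_{1,1}`. -/
def freeExtension (M : FinMatroid α) (e : α) (he : e ∉ M.E) : FinMatroid α :=
  truncation (M.directSum (freeM {e}) (Finset.disjoint_singleton_right.mpr he))

/-- Predicate expressing that `Z` is the (combinatorial) topological zeta function:
`Z` of the trivial matroid is `1` and `Z` satisfies the defining recurrence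
`Z_M(s) = (1/(|E|s + rk M)) ∑_{F proper flat} χ̄_{M/F}(1) ⬝ Z_{M|F}(s)`. -/
def IsTopZeta (Z : FinMatroid α → RatFunc ℚ) : Prop :=
  (∀ M : FinMatroid α, M.E = ∅ → Z M = 1) ∧
  (∀ M : FinMatroid α, M.E.Nonempty →
    Z M = (∑ F ∈ M.properFlats,
        RatFunc.C (M.redCharContractOne F) * Z (M.restrict F)) /
      ((M.E.card : RatFunc ℚ) * RatFunc.X + (M.rk M.E : RatFunc ℚ)))

/-- Predicate expressing that `μ M F` is the Möbius function value `μ(F, E)` in the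
lattice of flats of `M`: for every flat `F`, `∑_{G flat, F ⊆ G} μ(G,E) = δ_{F,E}`. -/
def IsFlatMobius (μ : FinMatroid α → Finset α → ℤ) : Prop :=
  ∀ (M : FinMatroid α) (F : Finset α), M.IsFlat F →
    (∑ G ∈ M.flats.filter fun G => F ⊆ G, μ M G) = if F = M.E then 1 else 0

/-- Predicate expressing that `Y` is the Möbius inversion of `Z`:
`Y_M(s) = ∑_{F ∈ L(M)} μ(F,E) Z_{M|F}(s)`. -/
def IsMobiusInv (μ : FinMatroid α → Finset α → ℤ)
    (Z Y : FinMatroid α → RatFunc ℚ) : Prop :=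
  ∀ M : FinMatroid α, Y M = ∑ F ∈ M.flats, (μ M F : RatFunc ℚ) * Z (M.restrict F)

/-- Predicate expressing that `Z` is the topological zeta function, viewed as an actual
function `ℝ → ℝ` (away from poles): base case `1` for the trivial matroid, and the
defining recurrence pointwise. -/
def IsTopZetaFun (Z : FinMatroid α → ℝ → ℝ) : Prop :=
  (∀ M : FinMatroid α, M.E = ∅ → Z M = fun _ => 1) ∧
  (∀ M : FinMatroid α, M.E.Nonempty → ∀ s : ℝ,
    Z M s = (∑ F ∈ M.properFlats, (M.redCharContractOne F : ℝ) * Z (M.restrict F) s) /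
      ((M.E.card : ℝ) * s + (M.rk M.E : ℝ)))

end FinMatroid

namespace FinMatroid

variable {α : Type*} [DecidableEq α]

@[simp] lemma truncation_E (M : FinMatroid α) : M.truncation.E = M.E := rfl

@[simp] lemma truncation_rk (M : FinMatroid α) (S : Finset α) :
    M.truncation.rk S = min (M.rk S) (M.rk M.E - 1) := rfl

@[simp] lemma restrict_E (M : FinMatroid α) (F : Finset α) : (M.restrict F).E = F := rfl

@[simp] lemma restrict_rk (M : FinMatroid α) (F S : Finset α) :
    (M.restrict F).rk S = M.rk S := rfl

lemma restrict_self (M : FinMatroid α) : M.restrict M.E = M := rfl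

lemma mem_flats {M : FinMatroid α} {F : Finset α} : F ∈ M.flats ↔ M.IsFlat F := by
  unfold flats
  rw [Finset.mem_filter, Finset.mem_powerset]
  exact ⟨fun h => h.2, fun h => ⟨h.1, h⟩⟩

lemma isFlat_E (M : FinMatroid α) : M.IsFlat M.E :=
  ⟨subset_rfl, fun x hx hx' => absurd hx hx'⟩

lemma rk_insert_le (M : FinMatroid α) (S : Finset α) (x : α) :
    M.rk (insert x S) ≤ M.rk S + 1 := by
  have h := M.rk_submod {x} S
  have h2 : M.rk {x} ≤ 1 := le_trans (M.rk_le_card _) (by simp)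
  have h3 : insert x S = {x} ∪ S := by rw [Finset.insert_eq]
  rw [h3]
  omega

lemma flat_rk_lt (M : FinMatroid α) {F : Finset α} (hF : M.IsFlat F) (hne : F ≠ M.E) :
    M.rk F < M.rk M.E := by
  obtain ⟨x, hxE, hxF⟩ := Finset.exists_of_ssubset (show F ⊂ M.E from
    ⟨hF.1, fun h => hne (subset_antisymm hF.1 h)⟩)
  exact lt_of_lt_of_le (hF.2 x hxE hxF) (M.rk_mono (Finset.insert_subset hxE hF.1))

lemma flat_eq_E_of_rk (M : FinMatroid α) {F : Finset α} (hF : M.IsFlat F)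
    (h : M.rk M.E ≤ M.rk F) : F = M.E := by
  by_contra hne
  exact absurd h (not_le.mpr (flat_rk_lt M hF hne))

lemma mem_cl {M : FinMatroid α} {T : Finset α} {x : α} :
    x ∈ M.cl T ↔ x ∈ M.E ∧ M.rk (insert x T) = M.rk T := Finset.mem_filter

lemma subset_cl (M : FinMatroid α) {T : Finset α} (h : T ⊆ M.E) : T ⊆ M.cl T := by
  intro x hx
  exact mem_cl.mpr ⟨h hx, by rw [Finset.insert_eq_self.mpr hx]⟩

lemma cl_subset_E (M : FinMatroid α) (T : Finset α) : M.cl T ⊆ M.E :=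
  Finset.filter_subset _ _

lemma rk_union_eq_of_subset_cl (M : FinMatroid α) (T : Finset α) {A : Finset α}
    (hA : A ⊆ M.cl T) : M.rk (T ∪ A) = M.rk T := by
  classical
  induction A using Finset.induction_on with
  | empty => rw [Finset.union_empty]
  | @insert a A' ha ih =>
    have haT : a ∈ M.cl T := hA (Finset.mem_insert_self a A')
    have hA' : A' ⊆ M.cl T := fun x hx => hA (Finset.mem_insert_of_mem hx)
    have ih' := ih hA'
    have hins : M.rk (insert a T) = M.rk T := (mem_cl.mp haT).2
    have hsub := M.rk_submod (insert a T) (T ∪ A')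
    have he1 : insert a T ∪ (T ∪ A') = insert a (T ∪ A') := by
      ext x; simp only [Finset.mem_union, Finset.mem_insert]; tauto
    have he2 : T ⊆ insert a T ∩ (T ∪ A') := by
      intro x hx
      simp only [Finset.mem_inter, Finset.mem_insert, Finset.mem_union]; tauto
    have hmono := M.rk_mono he2
    have hmono2 : M.rk (T ∪ A') ≤ M.rk (insert a (T ∪ A')) :=
      M.rk_mono (Finset.subset_insert _ _)
    have he3 : T ∪ insert a A' = insert a (T ∪ A') := by
      ext x; simp only [Finset.mem_union, Finset.mem_insert]; tauto
    rw [he3]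
    rw [he1] at hsub
    omega

lemma rk_cl (M : FinMatroid α) {T : Finset α} (h : T ⊆ M.E) : M.rk (M.cl T) = M.rk T := by
  have h1 : M.rk (T ∪ M.cl T) = M.rk T := rk_union_eq_of_subset_cl M T subset_rfl
  rwa [Finset.union_eq_right.mpr (subset_cl M h)] at h1

lemma isFlat_cl (M : FinMatroid α) {T : Finset α} (h : T ⊆ M.E) : M.IsFlat (M.cl T) := by
  refine ⟨cl_subset_E M T, fun x hx hx' => ?_⟩
  by_contra hcon
  have h1 : M.rk (insert x (M.cl T)) = M.rk (M.cl T) :=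
    le_antisymm (not_lt.mp hcon) (M.rk_mono (Finset.subset_insert _ _))
  have h2 : M.rk (insert x T) = M.rk T := by
    have hle : M.rk (insert x T) ≤ M.rk (insert x (M.cl T)) :=
      M.rk_mono (Finset.insert_subset_insert _ (subset_cl M h))
    have hge : M.rk T ≤ M.rk (insert x T) := M.rk_mono (Finset.subset_insert _ _)
    have := rk_cl M h
    omega
  exact hx' (mem_cl.mpr ⟨hx, h2⟩)

lemma cl_subset_iff (M : FinMatroid α) {T H : Finset α} (hH : M.IsFlat H) (hT : T ⊆ M.E) :
    M.cl T ⊆ H ↔ T ⊆ H := by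
  constructor
  · exact fun h => (subset_cl M hT).trans h
  · intro hTH x hx
    obtain ⟨hxE, hxrk⟩ := mem_cl.mp hx
    by_contra hxH
    have hflat := hH.2 x hxE hxH
    have hsub := M.rk_submod (insert x T) H
    have he1 : insert x T ∪ H = insert x H := by
      ext y; simp only [Finset.mem_union, Finset.mem_insert]
      constructor
      · rintro ((h | h) | h)
        · exact Or.inl h
        · exact Or.inr (hTH h)
        · exact Or.inr h
      · rintro (rfl | h)
        · exact Or.inl (Or.inl rfl)
        · exact Or.inr h
    have he2 : T ⊆ insert x T ∩ H := fun y hy =>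
      Finset.mem_inter.mpr ⟨Finset.mem_insert_of_mem hy, hTH hy⟩
    have hmono := M.rk_mono he2
    rw [he1] at hsub
    omega

lemma cl_eq_E_iff (M : FinMatroid α) {T : Finset α} (hT : T ⊆ M.E) :
    M.cl T = M.E ↔ M.rk T = M.rk M.E := by
  constructor
  · intro h
    have := rk_cl M hT
    rw [h] at this
    omega
  · intro h
    refine subset_antisymm (cl_subset_E M T) fun x hx => ?_
    refine mem_cl.mpr ⟨hx, le_antisymm ?_ (M.rk_mono (Finset.subset_insert _ _))⟩
    calc M.rk (insert x T) ≤ M.rk M.E := M.rk_mono (Finset.insert_subset hx hT)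
    _ = M.rk T := h.symm

end FinMatroid

namespace FinMatroid

variable {α : Type*} [DecidableEq α]

/-- `ν(F) = ∑_{S ⊆ E∖F} (-1)^{|S|} [rk(S∪F) = rk E]`, which equals `χ_{M/F}(0)`. -/
noncomputable def nu (M : FinMatroid α) (F : Finset α) : ℚ :=
  ∑ S ∈ (M.E \ F).powerset, (-1 : ℚ) ^ S.card * (if M.rk (S ∪ F) = M.rk M.E then 1 else 0)

lemma neg_one_sum {R : Type*} [CommRing R] (A : Finset α) :
    (∑ S ∈ A.powerset, (-1 : R) ^ S.card) = if A = ∅ then 1 else 0 := by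
  have h := Finset.sum_powerset_neg_one_pow_card (x := A)
  have h2 : ((∑ S ∈ A.powerset, (-1 : ℤ) ^ S.card : ℤ) : R)
      = ∑ S ∈ A.powerset, (-1 : R) ^ S.card := by push_cast; rfl
  rw [← h2, h]
  split <;> simp

lemma charPolyAux_eval_one (E' : Finset α) (rk' : Finset α → ℕ) (h : E'.Nonempty) :
    (charPolyAux E' rk').eval 1 = 0 := by
  unfold charPolyAux
  rw [Polynomial.eval_finset_sum]
  simp only [Polynomial.eval_mul, Polynomial.eval_pow, Polynomial.eval_neg,
    Polynomial.eval_one, Polynomial.eval_X, one_pow, mul_one]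
  rw [neg_one_sum]
  simp [Finset.nonempty_iff_ne_empty.mp h]

lemma charPolyAux_eval_zero (E' : Finset α) (rk' : Finset α → ℕ) :
    (charPolyAux E' rk').eval 0 =
      ∑ S ∈ E'.powerset, (-1 : ℚ) ^ S.card * (if rk' E' - rk' S = 0 then 1 else 0) := by
  unfold charPolyAux
  rw [Polynomial.eval_finset_sum]
  refine Finset.sum_congr rfl fun S _ => ?_
  simp only [Polynomial.eval_mul, Polynomial.eval_pow, Polynomial.eval_neg,
    Polynomial.eval_one, Polynomial.eval_X]
  congr 1
  rcases Nat.eq_zero_or_pos (rk' E' - rk' S) with h | h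
  · simp [h]
  · rw [zero_pow (by omega), if_neg (by omega)]

lemma sdiff_union_self (M : FinMatroid α) {F : Finset α} (hF : F ⊆ M.E) :
    (M.E \ F) ∪ F = M.E := by
  rw [Finset.sdiff_union_self_eq_union, Finset.union_eq_left.mpr hF]

lemma contract_eval_zero (M : FinMatroid α) {F : Finset α} (hF : F ⊆ M.E) :
    (M.contractCharPoly F).eval 0 = nu M F := by
  unfold contractCharPoly nu
  rw [charPolyAux_eval_zero]
  refine Finset.sum_congr rfl fun S hS => ?_
  have hS' : S ⊆ M.E \ F := Finset.mem_powerset.mp hS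
  have hSE : S ∪ F ⊆ M.E := Finset.union_subset (hS'.trans Finset.sdiff_subset) hF
  have h1 : M.rk F ≤ M.rk (S ∪ F) := M.rk_mono Finset.subset_union_right
  have h2 : M.rk (S ∪ F) ≤ M.rk M.E := M.rk_mono hSE
  rw [sdiff_union_self M hF]
  congr 1
  have hiff : (M.rk M.E - M.rk F) - (M.rk (S ∪ F) - M.rk F) = 0 ↔
      M.rk (S ∪ F) = M.rk M.E := by omega
  simp only [hiff]

lemma redChar_eval (p : Polynomial ℚ) (h : p.eval 1 = 0) :
    (Polynomial.X - Polynomial.C 1) * reducedCharPoly p = p :=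
  Polynomial.mul_divByMonic_eq_iff_isRoot.mpr h

lemma trunc_contract_identity (M : FinMatroid α) {F : Finset α} (hflat : M.IsFlat F)
    (hcr : M.rk F + 1 < M.rk M.E) :
    Polynomial.X * M.truncation.contractCharPoly F
      = M.contractCharPoly F
        + (Polynomial.X - Polynomial.C 1) * Polynomial.C (nu M F) := by
  classical
  have hFE : F ⊆ M.E := hflat.1
  have hEF : (M.E \ F) ∪ F = M.E := sdiff_union_self M hFE
  simp only [contractCharPoly, charPolyAux, nu, truncation_E, truncation_rk]
  rw [hEF, Finset.mul_sum, map_sum, Finset.mul_sum, ← Finset.sum_add_distrib]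
  refine Finset.sum_congr rfl fun S hS => ?_
  have hS' : S ⊆ M.E \ F := Finset.mem_powerset.mp hS
  have hSE : S ∪ F ⊆ M.E := Finset.union_subset (hS'.trans Finset.sdiff_subset) hFE
  have h1 : M.rk F ≤ M.rk (S ∪ F) := M.rk_mono Finset.subset_union_right
  have h2 : M.rk (S ∪ F) ≤ M.rk M.E := M.rk_mono hSE
  have ha : min (M.rk M.E) (M.rk M.E - 1) = M.rk M.E - 1 := by omega
  have hb : min (M.rk F) (M.rk M.E - 1) = M.rk F := by omega
  rw [ha, hb]
  by_cases hc : M.rk (S ∪ F) = M.rk M.E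
  · have hmin : min (M.rk (S ∪ F)) (M.rk M.E - 1) = M.rk M.E - 1 := by omega
    have he1 : (M.rk M.E - 1 - M.rk F) - (min (M.rk (S ∪ F)) (M.rk M.E - 1) - M.rk F) = 0 := by
      omega
    have he2 : (M.rk M.E - M.rk F) - (M.rk (S ∪ F) - M.rk F) = 0 := by omega
    rw [he1, he2, if_pos hc]
    simp only [pow_zero, mul_one]
    have : Polynomial.C ((-1 : ℚ) ^ S.card) = (-1 : Polynomial ℚ) ^ S.card := by
      rw [map_pow, map_neg, map_one]
    rw [this, Polynomial.C_1]
    ring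
  · have hmin : min (M.rk (S ∪ F)) (M.rk M.E - 1) = M.rk (S ∪ F) := by omega
    have he2 : (M.rk M.E - M.rk F) - (M.rk (S ∪ F) - M.rk F)
        = ((M.rk M.E - 1 - M.rk F) - (min (M.rk (S ∪ F)) (M.rk M.E - 1) - M.rk F)) + 1 := by
      omega
    rw [he2, if_neg hc, mul_zero, map_zero, mul_zero, add_zero, pow_succ]
    ring

lemma contract_eval_one (M : FinMatroid α) {F : Finset α} (hF : F ⊆ M.E) (hne : F ≠ M.E) :
    (M.contractCharPoly F).eval 1 = 0 := by
  have h : (M.E \ F).Nonempty := by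
    rw [Finset.sdiff_nonempty]
    exact fun h => hne (subset_antisymm hF h)
  exact charPolyAux_eval_one _ _ h

lemma redChar_trunc (M : FinMatroid α) {F : Finset α} (hflat : M.IsFlat F)
    (hcr : M.rk F + 1 < M.rk M.E) :
    M.truncation.redCharContractOne F = M.redCharContractOne F + nu M F := by
  have hFE : F ⊆ M.E := hflat.1
  have hne : F ≠ M.E := fun h => by
    rw [h] at hcr; omega
  have h1 : (M.truncation.contractCharPoly F).eval 1 = 0 :=
    contract_eval_one M.truncation hFE hne
  have h2 : (M.contractCharPoly F).eval 1 = 0 := contract_eval_one M hFE hne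
  have e1 := redChar_eval _ h1
  have e2 := redChar_eval _ h2
  have key := trunc_contract_identity M hflat hcr
  rw [← e1, ← e2] at key
  have hcancel : Polynomial.X * reducedCharPoly (M.truncation.contractCharPoly F)
      = reducedCharPoly (M.contractCharPoly F) + Polynomial.C (nu M F) := by
    have hXC : (Polynomial.X - Polynomial.C (1 : ℚ)) ≠ 0 := Polynomial.X_sub_C_ne_zero 1
    apply mul_left_cancel₀ hXC
    rw [mul_add]
    calc (Polynomial.X - Polynomial.C 1) *
          (Polynomial.X * reducedCharPoly (M.truncation.contractCharPoly F))
        = Polynomial.X * ((Polynomial.X - Polynomial.C 1) *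
            reducedCharPoly (M.truncation.contractCharPoly F)) := by ring
      _ = _ := key
  have := congrArg (Polynomial.eval 1) hcancel
  simp only [Polynomial.eval_mul, Polynomial.eval_X, Polynomial.eval_add,
    Polynomial.eval_C, one_mul] at this
  unfold redCharContractOne
  rw [← contract_eval_zero M hFE]
  rw [contract_eval_zero M hFE]
  exact this

lemma redChar_corank_one (M : FinMatroid α) {F : Finset α} (hflat : M.IsFlat F)
    (hcr : M.rk F + 1 = M.rk M.E) :
    M.redCharContractOne F = 1 := by
  classical
  have hFE : F ⊆ M.E := hflat.1
  have hne : F ≠ M.E := fun h => by rw [h] at hcr; omega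
  have hEFne : (M.E \ F).Nonempty := by
    rw [Finset.sdiff_nonempty]
    exact fun h => hne (subset_antisymm hFE h)
  have hpoly : M.contractCharPoly F = Polynomial.X - Polynomial.C 1 := by
    simp only [contractCharPoly, charPolyAux]
    rw [sdiff_union_self M hFE]
    have key : ∀ S ∈ (M.E \ F).powerset,
        (-1 : Polynomial ℚ) ^ S.card *
          Polynomial.X ^ ((M.rk M.E - M.rk F) - (M.rk (S ∪ F) - M.rk F))
        = (if S = ∅ then Polynomial.X - Polynomial.C 1 else 0) + (-1 : Polynomial ℚ) ^ S.card := by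
      intro S hS
      have hS' : S ⊆ M.E \ F := Finset.mem_powerset.mp hS
      by_cases hSe : S = ∅
      · subst hSe
        rw [Finset.empty_union]
        have he : (M.rk M.E - M.rk F) - (M.rk F - M.rk F) = 1 := by omega
        rw [he]
        simp [Polynomial.C_1]
      · obtain ⟨x, hx⟩ := Finset.nonempty_iff_ne_empty.mpr hSe
        have hxEF : x ∈ M.E \ F := hS' hx
        have hxE : x ∈ M.E := (Finset.mem_sdiff.mp hxEF).1
        have hxF : x ∉ F := (Finset.mem_sdiff.mp hxEF).2
        have h1 : M.rk F < M.rk (insert x F) := hflat.2 x hxE hxF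
        have h2 : M.rk (insert x F) ≤ M.rk (S ∪ F) :=
          M.rk_mono (Finset.insert_subset (Finset.mem_union_left _ hx)
            Finset.subset_union_right)
        have h3 : M.rk (S ∪ F) ≤ M.rk M.E :=
          M.rk_mono (Finset.union_subset (hS'.trans Finset.sdiff_subset) hFE)
        have he : (M.rk M.E - M.rk F) - (M.rk (S ∪ F) - M.rk F) = 0 := by omega
        rw [he, if_neg hSe, zero_add, pow_zero, mul_one]
    rw [Finset.sum_congr rfl key, Finset.sum_add_distrib, neg_one_sum,
      if_neg (Finset.nonempty_iff_ne_empty.mp hEFne), add_zero]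
    rw [Finset.sum_ite_eq' (M.E \ F).powerset ∅ (fun _ => Polynomial.X - Polynomial.C 1)]
    rw [if_pos (Finset.mem_powerset.mpr (Finset.empty_subset _))]
  unfold redCharContractOne
  rw [hpoly]
  have hq : reducedCharPoly (Polynomial.X - Polynomial.C (1:ℚ)) = 1 := by
    have hXC : (Polynomial.X - Polynomial.C (1 : ℚ)) ≠ 0 := Polynomial.X_sub_C_ne_zero 1
    apply mul_left_cancel₀ hXC
    rw [mul_one]
    exact redChar_eval _ (by simp)
  rw [hq]
  simp

end FinMatroid

namespace FinMatroid

variable {α : Type*} [DecidableEq α]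

lemma mu_E (μ : FinMatroid α → Finset α → ℤ) (hμ : IsFlatMobius μ) (M : FinMatroid α) :
    μ M M.E = 1 := by
  have h := hμ M M.E (isFlat_E M)
  have hfilter : M.flats.filter (fun G => M.E ⊆ G) = {M.E} := by
    ext G
    simp only [Finset.mem_filter, Finset.mem_singleton]
    constructor
    · rintro ⟨hG, hEG⟩
      exact subset_antisymm (mem_flats.mp hG).1 hEG
    · rintro rfl
      exact ⟨mem_flats.mpr (isFlat_E M), subset_rfl⟩
  rw [hfilter, Finset.sum_singleton, if_pos rfl] at h
  exact h

lemma mu_corank_one (μ : FinMatroid α → Finset α → ℤ) (hμ : IsFlatMobius μ)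
    (M : FinMatroid α) {F : Finset α} (hF : M.IsFlat F)
    (hcr : M.rk F + 1 = M.rk M.E) : μ M F = -1 := by
  have hne : F ≠ M.E := fun h => by rw [h] at hcr; omega
  have hfilter : M.flats.filter (fun G => F ⊆ G) = {F, M.E} := by
    ext G
    simp only [Finset.mem_filter, Finset.mem_insert, Finset.mem_singleton]
    constructor
    · rintro ⟨hG, hFG⟩
      by_cases hGF : G = F
      · exact Or.inl hGF
      · refine Or.inr ?_
        obtain ⟨x, hxG, hxF⟩ := Finset.exists_of_ssubset (show F ⊂ G from
          ⟨hFG, fun h => hGF (subset_antisymm h hFG)⟩)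
        have hGflat := mem_flats.mp hG
        have hxE : x ∈ M.E := hGflat.1 hxG
        have h1 : M.rk F < M.rk (insert x F) := hF.2 x hxE hxF
        have h2 : M.rk (insert x F) ≤ M.rk G := M.rk_mono (Finset.insert_subset hxG hFG)
        have h3 : M.rk G ≤ M.rk M.E := M.rk_mono hGflat.1
        exact flat_eq_E_of_rk M hGflat (by omega)
    · rintro (rfl | rfl)
      · exact ⟨mem_flats.mpr hF, subset_rfl⟩
      · exact ⟨mem_flats.mpr (isFlat_E M), hF.1⟩
  have h := hμ M F hF
  rw [hfilter, Finset.sum_insert (by simp [hne]), Finset.sum_singleton,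
    mu_E μ hμ M, if_neg hne] at h
  omega

lemma mu_eq_nu (μ : FinMatroid α → Finset α → ℤ) (hμ : IsFlatMobius μ)
    (M : FinMatroid α) {F : Finset α} (hF : M.IsFlat F) :
    (μ M F : ℚ) = nu M F := by
  classical
  have hFE : F ⊆ M.E := hF.1
  set P := (M.E \ F).powerset with hP
  set clf : Finset α → Finset α := fun S => M.cl (S ∪ F) with hclf
  set a : Finset α → ℚ :=
    fun G => ∑ S ∈ P.filter (fun S => clf S = G), (-1 : ℚ) ^ S.card with ha
  have hSE : ∀ S ∈ P, S ∪ F ⊆ M.E := by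
    intro S hS
    rw [hP, Finset.mem_powerset] at hS
    exact Finset.union_subset (hS.trans Finset.sdiff_subset) hFE
  -- Step A : column relations
  have stepA : ∀ H, M.IsFlat H → F ⊆ H →
      (∑ G ∈ M.flats.filter (fun G => F ⊆ G ∧ G ⊆ H), a G) = if H = F then 1 else 0 := by
    intro H hH hFH
    rw [ha]
    rw [Finset.sum_fiberwise_eq_sum_filter P (M.flats.filter (fun G => F ⊆ G ∧ G ⊆ H))
      clf (fun S => (-1 : ℚ) ^ S.card)]
    have hfe : P.filter (fun S => clf S ∈ M.flats.filter (fun G => F ⊆ G ∧ G ⊆ H))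
        = (H \ F).powerset := by
      ext S
      simp only [Finset.mem_filter, Finset.mem_powerset, hP]
      constructor
      · rintro ⟨hS1, -, -, h3⟩
        have hSF : S ∪ F ⊆ H := by
          refine (subset_cl M (hSE S (Finset.mem_powerset.mpr hS1))).trans ?_
          exact h3
        intro x hx
        exact Finset.mem_sdiff.mpr ⟨hSF (Finset.mem_union_left _ hx),
          (Finset.mem_sdiff.mp (hS1 hx)).2⟩
      · intro hS1
        have hSsub : S ⊆ M.E \ F := by
          intro x hx
          have := Finset.mem_sdiff.mp (hS1 hx)
          exact Finset.mem_sdiff.mpr ⟨hH.1 this.1, this.2⟩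
        have hSP : S ∈ P := Finset.mem_powerset.mpr hSsub
        have hSFH : S ∪ F ⊆ H :=
          Finset.union_subset (fun x hx => (Finset.mem_sdiff.mp (hS1 hx)).1) hFH
        refine ⟨hSsub, mem_flats.mpr (isFlat_cl M (hSE S hSP)), ?_, ?_⟩
        · exact Finset.subset_union_right.trans (subset_cl M (hSE S hSP))
        · exact (cl_subset_iff M hH (hSE S hSP)).mpr hSFH
    rw [hfe, neg_one_sum]
    have : H \ F = ∅ ↔ H = F := by
      rw [Finset.sdiff_eq_empty_iff_subset]
      exact ⟨fun h => subset_antisymm h hFH, fun h => h.le⟩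
    simp only [this]
  -- Step B : nu F = a M.E
  have stepB : nu M F = a M.E := by
    simp only [nu, ha]
    rw [Finset.sum_filter]
    refine Finset.sum_congr rfl fun S hS => ?_
    have hiff : clf S = M.E ↔ M.rk (S ∪ F) = M.rk M.E := cl_eq_E_iff M (hSE S hS)
    by_cases h : M.rk (S ∪ F) = M.rk M.E
    · rw [if_pos h, if_pos (hiff.mpr h), mul_one]
    · rw [if_neg h, if_neg (fun hc => h (hiff.mp hc)), mul_zero]
  -- cast of hμ
  have hμ' : ∀ G, M.IsFlat G →
      (∑ H ∈ M.flats.filter (fun H => G ⊆ H), (μ M H : ℚ)) = if G = M.E then 1 else 0 := by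
    intro G hG
    have h := hμ M G hG
    have h2 : ((∑ H ∈ M.flats.filter (fun H => G ⊆ H), μ M H : ℤ) : ℚ)
        = ∑ H ∈ M.flats.filter (fun H => G ⊆ H), (μ M H : ℚ) := by push_cast; rfl
    rw [← h2, h]
    split <;> simp
  -- double sum
  set T : ℚ := ∑ G ∈ M.flats.filter (fun G => F ⊆ G),
      ∑ H ∈ M.flats.filter (fun H => G ⊆ H), a G * (μ M H : ℚ) with hT
  have hT1 : T = a M.E := by
    rw [hT]
    have hcongr : ∀ G ∈ M.flats.filter (fun G => F ⊆ G),
        (∑ H ∈ M.flats.filter (fun H => G ⊆ H), a G * (μ M H : ℚ))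
          = if G = M.E then a G else 0 := by
      intro G hG
      rw [← Finset.mul_sum, hμ' G (mem_flats.mp (Finset.mem_filter.mp hG).1)]
      split <;> simp
    rw [Finset.sum_congr rfl hcongr, Finset.sum_ite_eq']
    rw [if_pos (Finset.mem_filter.mpr ⟨mem_flats.mpr (isFlat_E M), hFE⟩)]
  have hT2 : T = (μ M F : ℚ) := by
    rw [hT]
    have step1 : ∀ G ∈ M.flats,
        (if F ⊆ G then ∑ H ∈ M.flats.filter (fun H => G ⊆ H), a G * (μ M H : ℚ) else 0)
          = ∑ H ∈ M.flats, if F ⊆ G ∧ G ⊆ H then a G * (μ M H : ℚ) else 0 := by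
      intro G _
      by_cases hFG : F ⊆ G
      · rw [if_pos hFG, Finset.sum_filter]
        refine Finset.sum_congr rfl fun H _ => ?_
        by_cases hGH : G ⊆ H
        · rw [if_pos hGH, if_pos ⟨hFG, hGH⟩]
        · rw [if_neg hGH, if_neg (fun hc => hGH hc.2)]
      · rw [if_neg hFG]
        symm
        exact Finset.sum_eq_zero fun H _ => if_neg (fun hc => hFG hc.1)
    calc (∑ G ∈ M.flats.filter (fun G => F ⊆ G),
          ∑ H ∈ M.flats.filter (fun H => G ⊆ H), a G * (μ M H : ℚ))
        = ∑ G ∈ M.flats, ∑ H ∈ M.flats,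
            if F ⊆ G ∧ G ⊆ H then a G * (μ M H : ℚ) else 0 := by
          rw [Finset.sum_filter]
          exact Finset.sum_congr rfl step1
      _ = ∑ H ∈ M.flats, ∑ G ∈ M.flats,
            if F ⊆ G ∧ G ⊆ H then a G * (μ M H : ℚ) else 0 := Finset.sum_comm
      _ = ∑ H ∈ M.flats, if H = F then (μ M H : ℚ) else 0 := by
          refine Finset.sum_congr rfl fun H hH => ?_
          have hHflat := mem_flats.mp hH
          by_cases hFH : F ⊆ H
          · calc (∑ G ∈ M.flats, if F ⊆ G ∧ G ⊆ H then a G * (μ M H : ℚ) else 0)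
                = (∑ G ∈ M.flats.filter (fun G => F ⊆ G ∧ G ⊆ H), a G) * (μ M H : ℚ) := by
                  rw [Finset.sum_mul, Finset.sum_filter]
              _ = (if H = F then 1 else 0) * (μ M H : ℚ) := by rw [stepA H hHflat hFH]
              _ = if H = F then (μ M H : ℚ) else 0 := by split <;> simp
          · rw [Finset.sum_eq_zero fun G _ => if_neg (fun hc => hFH (hc.1.trans hc.2))]
            rw [if_neg (fun hc => hFH (by simp [hc]))]
      _ = (μ M F : ℚ) := by
          rw [Finset.sum_ite_eq', if_pos (mem_flats.mpr hF)]
  rw [← hT2, hT1, ← stepB]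

end FinMatroid

namespace FinMatroid

variable {α : Type*} [DecidableEq α]

lemma flats_congr (M M' : FinMatroid α) (hE : M.E = M'.E)
    (hrk : ∀ S ⊆ M.E, M.rk S = M'.rk S) : M.flats = M'.flats := by
  unfold flats
  rw [← hE]
  refine Finset.filter_congr fun F hF => ?_
  rw [Finset.mem_powerset] at hF
  unfold IsFlat
  rw [← hE]
  constructor
  · rintro ⟨h1, h2⟩
    refine ⟨h1, fun x hx hxF => ?_⟩
    rw [← hrk F hF, ← hrk _ (Finset.insert_subset hx hF)]
    exact h2 x hx hxF
  · rintro ⟨h1, h2⟩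
    refine ⟨h1, fun x hx hxF => ?_⟩
    rw [hrk F hF, hrk _ (Finset.insert_subset hx hF)]
    exact h2 x hx hxF

lemma contractCharPoly_congr (M M' : FinMatroid α) (hE : M.E = M'.E)
    (hrk : ∀ S ⊆ M.E, M.rk S = M'.rk S) {F : Finset α} (hF : F ⊆ M.E) :
    M.contractCharPoly F = M'.contractCharPoly F := by
  simp only [contractCharPoly, charPolyAux]
  rw [← hE]
  refine Finset.sum_congr rfl fun S hS => ?_
  rw [Finset.mem_powerset] at hS
  have h1 : S ∪ F ⊆ M.E := Finset.union_subset (hS.trans Finset.sdiff_subset) hF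
  have h2 : (M.E \ F) ∪ F ⊆ M.E := Finset.union_subset Finset.sdiff_subset hF
  rw [hrk _ h1, hrk _ h2, hrk _ hF]

lemma Z_congr (Z : FinMatroid α → RatFunc ℚ) (hZ : IsTopZeta Z) :
    ∀ (n : ℕ) (M M' : FinMatroid α), M.E.card ≤ n → M.E = M'.E →
      (∀ S ⊆ M.E, M.rk S = M'.rk S) → Z M = Z M' := by
  intro n
  induction n with
  | zero =>
    intro M M' hcard hE hrk
    have h0 : M.E = ∅ := Finset.card_eq_zero.mp (Nat.le_zero.mp hcard)
    rw [hZ.1 M h0, hZ.1 M' (hE ▸ h0)]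
  | succ n ih =>
    intro M M' hcard hE hrk
    rcases Finset.eq_empty_or_nonempty M.E with h0 | hne
    · rw [hZ.1 M h0, hZ.1 M' (hE ▸ h0)]
    · rw [hZ.2 M hne, hZ.2 M' (hE ▸ hne)]
      have hflats : M.properFlats = M'.properFlats := by
        unfold properFlats
        rw [flats_congr M M' hE hrk, hE]
      rw [← hflats, ← hE, ← hrk M.E subset_rfl]
      congr 1
      refine Finset.sum_congr rfl fun F hF => ?_
      have hFsub : F ⊆ M.E ∧ F ≠ M.E := by
        have h := Finset.mem_filter.mp hF
        have h2 := Finset.mem_filter.mp h.1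
        exact ⟨Finset.mem_powerset.mp h2.1, h.2⟩
      have hred : M.redCharContractOne F = M'.redCharContractOne F := by
        unfold redCharContractOne reducedCharPoly
        rw [contractCharPoly_congr M M' hE hrk hFsub.1]
      have hZr : Z (M.restrict F) = Z (M'.restrict F) := by
        refine ih (M.restrict F) (M'.restrict F) ?_ rfl ?_
        · have : F.card < M.E.card := Finset.card_lt_card ⟨hFsub.1,
            fun h => hFsub.2 (subset_antisymm hFsub.1 h)⟩
          simp only [restrict_E]
          omega
        · intro S hS
          exact hrk S (hS.trans hFsub.1)
      rw [hred, hZr]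

lemma truncation_properFlats (M : FinMatroid α) (r : ℕ) (hr : M.rk M.E = r) (hr1 : 1 ≤ r) :
    M.truncation.properFlats = M.flats.filter (fun F => M.rk F + 1 < r) := by
  ext F
  simp only [properFlats, flats, Finset.mem_filter, Finset.mem_powerset]
  simp only [truncation_E, IsFlat, truncation_rk]
  constructor
  · rintro ⟨⟨hFE, h1, h2⟩, hne⟩
    obtain ⟨x0, hx0E, hx0F⟩ := Finset.exists_of_ssubset (show F ⊂ M.E from
      ⟨hFE, fun h => hne (subset_antisymm hFE h)⟩)
    have hx0 := h2 x0 hx0E hx0F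
    have hins : M.rk (insert x0 F) ≤ r := hr ▸ M.rk_mono (Finset.insert_subset hx0E hFE)
    have hFr : M.rk F + 1 < r := by
      rw [hr] at hx0
      omega
    refine ⟨⟨hFE, hFE, fun x hx hxF => ?_⟩, hFr⟩
    have := h2 x hx hxF
    rw [hr] at this
    omega
  · rintro ⟨⟨hFE, h1, h2⟩, hFr⟩
    have hne : F ≠ M.E := by
      intro h
      rw [h, hr] at hFr
      omega
    refine ⟨⟨hFE, hFE, fun x hx hxF => ?_⟩, hne⟩
    have hlt := h2 x hx hxF
    rw [hr]
    omega

lemma den_ne_zero (n m : ℕ) (hn : n ≠ 0) :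
    ((n : RatFunc ℚ) * RatFunc.X + (m : RatFunc ℚ)) ≠ 0 := by
  have h : ((n : RatFunc ℚ) * RatFunc.X + (m : RatFunc ℚ))
      = algebraMap (Polynomial ℚ) (RatFunc ℚ)
          ((n : Polynomial ℚ) * Polynomial.X + (m : Polynomial ℚ)) := by
    rw [map_add, map_mul, RatFunc.algebraMap_X, map_natCast, map_natCast]
  rw [h]
  apply RatFunc.algebraMap_ne_zero
  intro h0
  have hc := congrArg (fun p => Polynomial.coeff p 1) h0
  simp only [Polynomial.coeff_add, Polynomial.coeff_zero] at hc
  rw [Polynomial.coeff_natCast_ite] at hc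
  have : ((n : Polynomial ℚ) * Polynomial.X).coeff 1 = (n : ℚ) := by
    rw [Polynomial.coeff_mul_X]
    simp
  rw [this] at hc
  simp at hc
  exact hn (by exact_mod_cast hc)

end FinMatroid


open FinMatroid in
/-- `Z_{tr(M)}(s) = Z_M(s) + Y_M(s)/(|E|s + rk M - 1)`. -/
theorem topZeta_truncation {α : Type*} [DecidableEq α]
    (Z Y : FinMatroid α → RatFunc ℚ) (μ : FinMatroid α → Finset α → ℤ)
    (hZ : IsTopZeta Z) (hμ : IsFlatMobius μ) (hY : IsMobiusInv μ Z Y)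
    (M : FinMatroid α) (hL : M.Loopless) (r : ℕ) (hr : M.rk M.E = r) (hr1 : 1 ≤ r) :
    Z M.truncation = Z M +
      (1 / ((M.E.card : RatFunc ℚ) * RatFunc.X + ((r - 1 : ℕ) : RatFunc ℚ))) * Y M := by
  classical
  have hne : M.E.Nonempty := by
    rcases Finset.eq_empty_or_nonempty M.E with h | h
    · rw [h, M.rk_empty] at hr; omega
    · exact h
  have hcard : M.E.card ≠ 0 := Finset.card_ne_zero.mpr hne
  have hD1ne : ((M.E.card : RatFunc ℚ) * RatFunc.X + ((r - 1 : ℕ) : RatFunc ℚ)) ≠ 0 :=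
    den_ne_zero _ _ hcard
  have hDne : ((M.E.card : RatFunc ℚ) * RatFunc.X + (r : RatFunc ℚ)) ≠ 0 :=
    den_ne_zero _ _ hcard
  -- recurrence for the truncation
  have hne' : M.truncation.E.Nonempty := hne
  have hZtr := hZ.2 M.truncation hne'
  simp only [truncation_E, truncation_rk] at hZtr
  rw [hr] at hZtr
  have hminr : min r (r - 1) = r - 1 := by omega
  rw [hminr, truncation_properFlats M r hr hr1] at hZtr
  -- rewrite the numerator of the truncation recurrence
  have hnum : ∀ F ∈ M.flats.filter (fun F => M.rk F + 1 < r),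
      RatFunc.C (M.truncation.redCharContractOne F) * Z (M.truncation.restrict F)
        = RatFunc.C (M.redCharContractOne F) * Z (M.restrict F)
          + (μ M F : RatFunc ℚ) * Z (M.restrict F) := by
    intro F hF
    obtain ⟨hFfl, hFr⟩ := Finset.mem_filter.mp hF
    have hflat := mem_flats.mp hFfl
    have hcr : M.rk F + 1 < M.rk M.E := by rw [hr]; exact hFr
    have hred := redChar_trunc M hflat hcr
    have hmu : nu M F = (μ M F : ℚ) := (mu_eq_nu μ hμ M hflat).symm
    have hZeq : Z (M.truncation.restrict F) = Z (M.restrict F) := by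
      refine Z_congr Z hZ F.card _ _ le_rfl rfl ?_
      intro S hS
      simp only [restrict_E] at hS
      simp only [restrict_rk, truncation_rk]
      have h1 : M.rk S ≤ M.rk F := M.rk_mono hS
      omega
    rw [hred, hmu, hZeq, map_add, add_mul]
    congr 2
    exact map_intCast RatFunc.C (μ M F)
  rw [Finset.sum_congr rfl hnum, Finset.sum_add_distrib] at hZtr
  -- splitting lemmas for sums over flats
  have key : ∀ F ∈ M.flats, ∀ f : Finset α → RatFunc ℚ,
      (if F ≠ M.E then f F else 0)
        = (if M.rk F + 1 < r then f F else 0) + (if M.rk F + 1 = r then f F else 0) := by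
    intro F hF f
    have hflat := mem_flats.mp hF
    have hle : M.rk F ≤ r := hr ▸ M.rk_mono hflat.1
    by_cases hFE : F = M.E
    · have hrF : M.rk F = r := by rw [hFE, hr]
      rw [if_neg (by simp [hFE]), if_neg (by omega), if_neg (by omega), add_zero]
    · have hlt : M.rk F < r := hr ▸ flat_rk_lt M hflat hFE
      by_cases h2 : M.rk F + 1 < r
      · rw [if_pos hFE, if_pos h2, if_neg (by omega), add_zero]
      · rw [if_pos hFE, if_neg h2, if_pos (by omega), zero_add]
  have hsplitP : ∀ f : Finset α → RatFunc ℚ,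
      (∑ F ∈ M.properFlats, f F)
        = (∑ F ∈ M.flats.filter (fun F => M.rk F + 1 < r), f F)
          + (∑ F ∈ M.flats.filter (fun F => M.rk F + 1 = r), f F) := by
    intro f
    have hpf : M.properFlats = M.flats.filter (fun F => F ≠ M.E) := rfl
    rw [hpf, Finset.sum_filter, Finset.sum_filter, Finset.sum_filter,
      ← Finset.sum_add_distrib]
    exact Finset.sum_congr rfl fun F hF => key F hF f
  have hsplitF : ∀ f : Finset α → RatFunc ℚ,
      (∑ F ∈ M.flats, f F)
        = ((∑ F ∈ M.flats.filter (fun F => M.rk F + 1 < r), f F)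
          + (∑ F ∈ M.flats.filter (fun F => M.rk F + 1 = r), f F)) + f M.E := by
    intro f
    have h1 : (∑ F ∈ M.flats, f F) = (∑ F ∈ M.properFlats, f F) + f M.E := by
      have h2 : ∑ F ∈ M.flats, f F
          = ∑ F ∈ M.flats, ((if F ≠ M.E then f F else 0) + (if F = M.E then f F else 0)) := by
        refine Finset.sum_congr rfl fun F _ => ?_
        by_cases h : F = M.E <;> simp [h]
      rw [h2, Finset.sum_add_distrib, Finset.sum_ite_eq' M.flats M.E f,
        if_pos (mem_flats.mpr (isFlat_E M))]
      congr 1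
      rw [← Finset.sum_filter]
      rfl
    rw [h1, hsplitP f]
  -- corank one flats
  have hcor1 : ∀ F ∈ M.flats.filter (fun F => M.rk F + 1 = r),
      RatFunc.C (M.redCharContractOne F) * Z (M.restrict F) = Z (M.restrict F) := by
    intro F hF
    obtain ⟨hFfl, hFr⟩ := Finset.mem_filter.mp hF
    rw [redChar_corank_one M (mem_flats.mp hFfl) (by rw [hr]; exact hFr), map_one, one_mul]
  have hcor2 : ∀ F ∈ M.flats.filter (fun F => M.rk F + 1 = r),
      (μ M F : RatFunc ℚ) * Z (M.restrict F) = - Z (M.restrict F) := by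
    intro F hF
    obtain ⟨hFfl, hFr⟩ := Finset.mem_filter.mp hF
    rw [mu_corank_one μ hμ M (mem_flats.mp hFfl) (by rw [hr]; exact hFr)]
    push_cast
    ring
  -- the recurrence for M itself
  have hZM := hZ.2 M hne
  rw [hr] at hZM
  have hSM : (∑ F ∈ M.properFlats, RatFunc.C (M.redCharContractOne F) * Z (M.restrict F))
      = Z M * ((M.E.card : RatFunc ℚ) * RatFunc.X + (r : RatFunc ℚ)) :=
    (div_eq_iff hDne).mp hZM.symm
  -- value of A1
  have hA1 : (∑ F ∈ M.flats.filter (fun F => M.rk F + 1 < r),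
        RatFunc.C (M.redCharContractOne F) * Z (M.restrict F))
      = Z M * ((M.E.card : RatFunc ℚ) * RatFunc.X + (r : RatFunc ℚ))
        - (∑ F ∈ M.flats.filter (fun F => M.rk F + 1 = r), Z (M.restrict F)) := by
    have := hsplitP (fun F => RatFunc.C (M.redCharContractOne F) * Z (M.restrict F))
    rw [hSM] at this
    rw [Finset.sum_congr rfl hcor1] at this
    linear_combination -this
  -- value of A2
  have hYM := hY M
  have hA2 : (∑ F ∈ M.flats.filter (fun F => M.rk F + 1 < r),
        (μ M F : RatFunc ℚ) * Z (M.restrict F))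
      = Y M + (∑ F ∈ M.flats.filter (fun F => M.rk F + 1 = r), Z (M.restrict F)) - Z M := by
    have hs := hsplitF (fun F => (μ M F : RatFunc ℚ) * Z (M.restrict F))
    rw [← hYM] at hs
    rw [Finset.sum_congr rfl hcor2, Finset.sum_neg_distrib] at hs
    have hmuE : ((μ M M.E : ℤ) : RatFunc ℚ) = 1 := by rw [mu_E μ hμ M]; norm_num
    rw [hmuE, one_mul, restrict_self] at hs
    linear_combination -hs
  rw [hA1, hA2] at hZtr
  -- final algebra
  have hrc : (r : RatFunc ℚ) = ((r - 1 : ℕ) : RatFunc ℚ) + 1 := by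
    have h2 : ((r - 1 : ℕ) : RatFunc ℚ) + 1 = (((r - 1) + 1 : ℕ) : RatFunc ℚ) := by push_cast; ring
    rw [h2]
    congr 1
    omega
  have hgoal : Z M + (1 / ((M.E.card : RatFunc ℚ) * RatFunc.X + ((r - 1 : ℕ) : RatFunc ℚ))) * Y M
      = (Z M * ((M.E.card : RatFunc ℚ) * RatFunc.X + ((r - 1 : ℕ) : RatFunc ℚ)) + Y M)
        / ((M.E.card : RatFunc ℚ) * RatFunc.X + ((r - 1 : ℕ) : RatFunc ℚ)) := by
    rw [add_div, mul_div_cancel_right₀ _ hD1ne, one_div_mul_eq_div]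
  rw [hZtr, hgoal]
  congr 1
  rw [hrc]
  ring
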